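/- In the power-series quotient update, only the middle coefficients of G·Q_k are needed: with notation as above, (F − G·Q_k) div X^k taken mod X^ℓ equals F_{[k..k+ℓ[} − MP(G_{[1..k+ℓ[}, Q_{k[0..k[}), where MP(A,B) = (A·B div X^{k-1}) mod X^ℓ for A of size k+ℓ-1 and B of size k. -/
import Mathlib


open Polynomial

/-- `chunk F a b` is the polynomial `F_{[a..b[}` = Σ_{i=a}^{b-1} f_i X^{i-a}. -/
noncomputable def chunk {K : Type*} [CommRing K] (F : Polynomial K) (a b : ℕ) : Polynomial K :=
  ∑ i ∈ Finset.range (b - a), Polynomial.C (F.coeff (a + i)) * Polynomial.X ^ i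

lemma chunk_coeff {K : Type*} [CommRing K] (F : Polynomial K) (a b j : ℕ) :
    (chunk F a b).coeff j = if j < b - a then F.coeff (a + j) else 0 := by
  unfold chunk
  rw [Polynomial.finset_sum_coeff]
  simp only [Polynomial.coeff_C_mul, Polynomial.coeff_X_pow, mul_ite, mul_one, mul_zero]
  rw [Finset.sum_ite_eq (Finset.range (b - a)) j (fun i => F.coeff (a + i))]
  simp [Finset.mem_range]

/-- Only the middle coefficients of `G·Qk` are needed in the quotient update:
for `0 ≤ i < ℓ`, the coefficient of `X^i` in `((F − G·Qk) div X^k) mod X^ℓ` equals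
`F_{[k+i]} − MP(G_{[1..k+ℓ[}, Qk)_{[i]}`, where `MP(A,B) = ((A·B) div X^{k-1}) mod X^ℓ`. -/
theorem middle_product_update {K : Type*} [CommRing K] (k ℓ : ℕ) (hℓ : 0 < ℓ) (hlk : ℓ ≤ k)
    (F G Qk : Polynomial K)
    (hQkdeg : ∀ i, k ≤ i → Qk.coeff i = 0)
    (hQk : ∀ i < k, F.coeff i = (G * Qk).coeff i) :
    ∀ i < ℓ,
      (F - G * Qk).coeff (k + i) =
        F.coeff (k + i) - (chunk ((chunk G 1 (k + ℓ)) * Qk) (k - 1) ((k - 1) + ℓ)).coeff i := by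
  intro i hi
  have hk : 1 ≤ k := le_trans hℓ hlk
  have key : (chunk ((chunk G 1 (k + ℓ)) * Qk) (k - 1) ((k - 1) + ℓ)).coeff i
      = (G * Qk).coeff (k + i) := by
    rw [chunk_coeff, if_pos (by omega : i < (k - 1) + ℓ - (k - 1))]
    rw [Polynomial.coeff_mul, Polynomial.coeff_mul]
    rw [Finset.Nat.sum_antidiagonal_eq_sum_range_succ_mk,
        Finset.Nat.sum_antidiagonal_eq_sum_range_succ_mk]
    have h1 : k + i = (k - 1 + i) + 1 := by omega
    conv_rhs => rw [h1, Finset.sum_range_succ']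
    have h0 : Qk.coeff ((k - 1 + i + 1 - 0 : ℕ)) = 0 := hQkdeg _ (by omega)
    simp only [h0, mul_zero, add_zero]
    apply Finset.sum_congr rfl
    intro j hj
    rw [Finset.mem_range] at hj
    rw [chunk_coeff, if_pos (by omega : j < k + ℓ - 1)]
    congr 2 <;> omega
  rw [Polynomial.coeff_sub, key]
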